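/- Let X_1, X_2, ... be i.i.d. [0,1]-valued random variables with mean μ and variance σ². Let μ̂_{i} denote running estimates with μ̂_{i} → μ almost surely and |X_i − μ̂_{i-1}| ≤ 1. Then the modified variance estimator σ̂_n² = (1/n)∑_{i=1}^n (X_i − μ̂_{i-1})² converges to σ² almost surely. -/

import Mathlib

open MeasureTheory ProbabilityTheory Filter
open scoped Topology

/-- Consistency of the modified running variance estimator: for i.i.d. [0,1]-valued
    observations with mean μ and variance σ², if μ̂ᵢ → μ a.s. and |Xᵢ − μ̂_{i−1}| ≤ 1,
    then (1/n)∑_{i=1}^n (Xᵢ − μ̂_{i−1})² → σ² almost surely.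
    (Here `muhat i` denotes the estimate μ̂_{i−1} used for the i-th observation.) -/
theorem modified_variance_estimator_consistent
    {Ω : Type*} {m0 : MeasurableSpace Ω} (P : Measure Ω) [IsProbabilityMeasure P]
    (X : ℕ → Ω → ℝ) (hXmeas : ∀ i, Measurable (X i))
    (hXbdd : ∀ i ω, X i ω ∈ Set.Icc (0 : ℝ) 1)
    (hindep : iIndepFun X P)
    (hident : ∀ i, IdentDistrib (X i) (X 0) P P)
    (μ σ2 : ℝ) (hμ : ∫ ω, X 0 ω ∂P = μ) (hσ2 : variance (X 0) P = σ2)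
    (muhat : ℕ → Ω → ℝ)
    (hconv : ∀ᵐ ω ∂P, Tendsto (fun i => muhat i ω) atTop (𝓝 μ))
    (hbd : ∀ i ω, |X i ω - muhat i ω| ≤ 1) :
    ∀ᵐ ω ∂P, Tendsto
      (fun n : ℕ => (1 / (n : ℝ)) * ∑ i ∈ Finset.range n, (X i ω - muhat i ω) ^ 2)
      atTop (𝓝 σ2) := by
  -- The centered squared observations
  set Y : ℕ → Ω → ℝ := fun i ω => (X i ω - μ) ^ 2 with hY
  have hμ01 : μ ∈ Set.Icc (0 : ℝ) 1 := by
    constructor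
    · rw [← hμ]; exact integral_nonneg fun ω => (hXbdd 0 ω).1
    · rw [← hμ]
      calc ∫ ω, X 0 ω ∂P ≤ ∫ _, (1 : ℝ) ∂P := by
            apply integral_mono _ (integrable_const 1) fun ω => (hXbdd 0 ω).2
            exact (integrable_const 1).mono' (hXmeas 0).aestronglyMeasurable
              (Filter.Eventually.of_forall fun ω => by
                rw [Real.norm_eq_abs, abs_of_nonneg (hXbdd 0 ω).1]; exact (hXbdd 0 ω).2)
        _ = 1 := by simp
  have hXμ : ∀ i ω, |X i ω - μ| ≤ 1 := by
    intro i ω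
    rw [abs_le]
    constructor <;> nlinarith [(hXbdd i ω).1, (hXbdd i ω).2, hμ01.1, hμ01.2]
  have hYmeas : ∀ i, Measurable (Y i) := fun i => ((hXmeas i).sub measurable_const).pow_const 2
  have hYint : Integrable (Y 0) P :=
    (integrable_const 1).mono' (hYmeas 0).aestronglyMeasurable
      (Filter.Eventually.of_forall fun ω => by
        rw [Real.norm_eq_abs, abs_of_nonneg (sq_nonneg _)]
        calc (X 0 ω - μ) ^ 2 = |X 0 ω - μ| ^ 2 := (sq_abs _).symm
          _ ≤ 1 ^ 2 := pow_le_pow_left₀ (abs_nonneg _) (hXμ 0 ω) 2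
          _ = 1 := one_pow 2)
  have hYindep : Pairwise (Function.onFun (IndepFun · · P) Y) := by
    intro i j hij
    exact (hindep.indepFun hij).comp
      ((measurable_id.sub measurable_const).pow_const 2)
      ((measurable_id.sub measurable_const).pow_const 2)
  have hYident : ∀ i, IdentDistrib (Y i) (Y 0) P P := fun i =>
    (hident i).comp ((measurable_id.sub measurable_const).pow_const 2)
  have hEY : ∫ ω, Y 0 ω ∂P = σ2 := by
    rw [← hσ2]
    have hX2 : MemLp (X 0) 2 P :=
      memLp_of_bounded (Filter.Eventually.of_forall fun ω =>
        ⟨(hXbdd 0 ω).1, (hXbdd 0 ω).2⟩) (hXmeas 0).aestronglyMeasurable 2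
    rw [variance_eq_integral hX2.aemeasurable]
    simp only [hY, hμ]
  have hSLLN := strong_law_ae_real Y hYint hYindep hYident
  rw [hEY] at hSLLN
  filter_upwards [hSLLN, hconv] with ω hω1 hω2
  -- error term
  set e : ℕ → ℝ := fun i => (X i ω - muhat i ω) ^ 2 - Y i ω with he
  have he0 : Tendsto e atTop (𝓝 0) := by
    have hd : Tendsto (fun i => μ - muhat i ω) atTop (𝓝 0) := by
      have := hω2.const_sub μ
      simpa using this
    have hbound : ∀ i, ‖e i‖ ≤ 2 * |μ - muhat i ω| + |μ - muhat i ω| ^ 2 := by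
      intro i
      have : e i = 2 * (X i ω - μ) * (μ - muhat i ω) + (μ - muhat i ω) ^ 2 := by
        simp only [he, hY]; ring
      rw [this, Real.norm_eq_abs]
      calc |2 * (X i ω - μ) * (μ - muhat i ω) + (μ - muhat i ω) ^ 2|
          ≤ |2 * (X i ω - μ) * (μ - muhat i ω)| + |(μ - muhat i ω) ^ 2| := abs_add_le _ _
        _ ≤ 2 * |μ - muhat i ω| + |μ - muhat i ω| ^ 2 := by
            rw [abs_mul, abs_mul, abs_two, abs_pow]
            have := hXμ i ω
            have := abs_nonneg (μ - muhat i ω)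
            nlinarith [abs_nonneg (X i ω - μ)]
    apply squeeze_zero_norm hbound
    have habs : Tendsto (fun i => |μ - muhat i ω|) atTop (𝓝 0) := by
      simpa using hd.abs
    have : Tendsto (fun i => 2 * |μ - muhat i ω| + |μ - muhat i ω| ^ 2) atTop
        (𝓝 (2 * 0 + 0 ^ 2)) := ((habs.const_mul 2).add (habs.pow 2))
    simpa using this
  have hcesaro : Tendsto (fun n : ℕ => (∑ i ∈ Finset.range n, e i) / n) atTop (𝓝 0) := by
    simpa [div_eq_inv_mul] using he0.cesaro
  have hsum : Tendsto (fun n : ℕ =>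
      (∑ i ∈ Finset.range n, Y i ω) / n + (∑ i ∈ Finset.range n, e i) / n)
      atTop (𝓝 (σ2 + 0)) := hω1.add hcesaro
  rw [add_zero] at hsum
  convert hsum using 2 with n
  rw [← add_div, ← Finset.sum_add_distrib, one_div, inv_mul_eq_div]
  congr 1
  apply Finset.sum_congr rfl
  intro i _
  simp [he]
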